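/- Let e be a regular expression over α. (1) If e is nullable (ε ∈ matches' e), then 1 ⊴ e. (2) For every a ∈ α and every e' ∈ ∂(e, a) (the Antimirov derivative), char a * e' ⊴ e. -/

import Mathlib

/-- Homomorphic extension of `h : α → K` to regular expressions. -/
def interp {α : Type*} {K : Type*} [KleeneAlgebra K] (h : α → K) :
    RegularExpression α → K
  | .zero => 0
  | .epsilon => 1
  | .char a => h a
  | .plus e f => interp h e + interp h f
  | .comp e f => interp h e * interp h f
  | .star e => KStar.kstar (interp h e)

universe u

/-- `e ⊴ f`: under every interpretation into any Kleene algebra, `ĥ e ≤ ĥ f`. -/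
def kle {α : Type*} (e f : RegularExpression α) : Prop :=
  ∀ (K : Type u) [KleeneAlgebra K] (h : α → K), interp h e ≤ interp h f

/-- The Antimirov derivative of a regular expression with respect to a letter. -/
def aderiv {α : Type*} : RegularExpression α → α → Set (RegularExpression α)
  | .zero, _ => ∅
  | .epsilon, _ => ∅
  | .char b, a => {f | a = b ∧ f = 1}
  | .plus e f, a => aderiv e a ∪ aderiv f a
  | .comp e f, a =>
      (fun e' => e' * f) '' aderiv e a ∪ {f' | f' ∈ aderiv f a ∧ [] ∈ e.matches'}
  | .star e, a => (fun e' => e' * e.star) '' aderiv e a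

theorem nullable_interp_le {α : Type*} {e : RegularExpression α} (hnil : [] ∈ e.matches')
    {K : Type*} [KleeneAlgebra K] (h : α → K) : 1 ≤ interp h e := by
  induction e with
  | zero => simp [RegularExpression.matches'] at hnil
  | epsilon => exact le_rfl
  | char b =>
    rw [RegularExpression.matches'_char] at hnil
    replace hnil : ([] : List α) = [b] := hnil
    exact absurd hnil.symm (List.cons_ne_nil _ _)
  | plus e f ihe ihf =>
    simp only [RegularExpression.matches', Language.mem_add] at hnil
    show (1:K) ≤ interp h e + interp h f
    rw [add_eq_sup]
    rcases hnil with hnil | hnil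
    · exact le_trans (ihe hnil) le_sup_left
    · exact le_trans (ihf hnil) le_sup_right
  | comp e f ihe ihf =>
    simp only [RegularExpression.matches', Language.mem_mul] at hnil
    obtain ⟨x, hx, y, hy, hxy⟩ := hnil
    rcases List.append_eq_nil_iff.mp hxy with ⟨rfl, rfl⟩
    calc (1 : K) = 1 * 1 := (one_mul 1).symm
      _ ≤ interp h e * interp h f := mul_le_mul' (ihe hx) (ihf hy)
  | star e ihe => exact one_le_kstar

/-- (1) A nullable expression is provably above `1`; (2) each Antimirov derivative `e'` of
`e` w.r.t. `a` satisfies `char a * e' ⊴ e`. -/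
theorem nullable_and_deriv_le {α : Type*} (e : RegularExpression α) :
    ([] ∈ e.matches' → kle 1 e) ∧
    (∀ (a : α), ∀ e' ∈ aderiv e a, kle (RegularExpression.char a * e') e) := by
  induction e with
  | zero =>
    constructor
    · intro hnil; simp [RegularExpression.matches'_zero] at hnil
    · intro a e' he'; simp [aderiv] at he'
  | epsilon =>
    constructor
    · intro _ K _ h; exact le_rfl
    · intro a e' he'; simp [aderiv] at he'
  | char b =>
    constructor
    · intro hnil
      rw [RegularExpression.matches'_char] at hnil
      replace hnil : ([] : List α) = [b] := hnil
      exact absurd hnil.symm (List.cons_ne_nil _ _)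
    · rintro a e' ⟨rfl, rfl⟩ K _ h
      simp [interp]
  | plus e f ihe ihf =>
    constructor
    · intro hnil K _ h
      simp only [RegularExpression.matches', Language.mem_add] at hnil
      show (1:K) ≤ interp h e + interp h f
      rw [add_eq_sup]
      rcases hnil with hnil | hnil
      · exact le_trans (ihe.1 hnil K h) le_sup_left
      · exact le_trans (ihf.1 hnil K h) le_sup_right
    · rintro a e' (he' | he') K _ h
      · show h a * interp h e' ≤ interp h e + interp h f
        rw [add_eq_sup]
        exact le_trans (ihe.2 a e' he' K h) le_sup_left
      · show h a * interp h e' ≤ interp h e + interp h f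
        rw [add_eq_sup]
        exact le_trans (ihf.2 a e' he' K h) le_sup_right
  | comp e f ihe ihf =>
    constructor
    · intro hnil K _ h
      simp only [RegularExpression.matches', Language.mem_mul] at hnil
      obtain ⟨x, hx, y, hy, hxy⟩ := hnil
      rcases List.append_eq_nil_iff.mp hxy with ⟨rfl, rfl⟩
      calc (1 : K) = 1 * 1 := (one_mul 1).symm
        _ ≤ interp h e * interp h f := mul_le_mul' (ihe.1 hx K h) (ihf.1 hy K h)
    · rintro a e' (⟨e₀, he₀, rfl⟩ | ⟨hf', hnile⟩) K _ h
      · show h a * (interp h e₀ * interp h f) ≤ interp h e * interp h f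
        rw [← mul_assoc]
        exact mul_le_mul' (ihe.2 a e₀ he₀ K h) le_rfl
      · show h a * interp h e' ≤ interp h e * interp h f
        calc h a * interp h e' ≤ interp h f := ihf.2 a e' hf' K h
          _ = 1 * interp h f := (one_mul _).symm
          _ ≤ interp h e * interp h f := mul_le_mul' (nullable_interp_le hnile h) le_rfl
  | star e ihe =>
    constructor
    · intro _ K _ h; exact one_le_kstar
    · rintro a e' ⟨e₀, he₀, rfl⟩ K _ h
      show h a * (interp h e₀ * KStar.kstar (interp h e)) ≤ KStar.kstar (interp h e)
      rw [← mul_assoc]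
      calc h a * interp h e₀ * KStar.kstar (interp h e)
          ≤ interp h e * KStar.kstar (interp h e) := mul_le_mul' (ihe.2 a e₀ he₀ K h) le_rfl
        _ ≤ KStar.kstar (interp h e) := mul_kstar_le_kstar
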